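/- Let E be a complex Hilbert space, y in the open unit ball with y ≠ 0, and define f_y(x) = 1/(1 - ⟨x,y⟩) for x in the open unit ball. Then f_y is holomorphic and its Bloch semi-norm satisfies sup_{x ∈ B_E} (1-‖x‖²)‖f_y'(x)‖ = ‖y‖/(1-‖y‖²). -/

import Mathlib

theorem stmt16 {E : Type*} [NormedAddCommGroup E] [InnerProductSpace ℂ E] [CompleteSpace E]
    (y : E) (hy : ‖y‖ < 1) (hy0 : y ≠ 0) :
    DifferentiableOn ℂ (fun x : E => (1 - (inner ℂ y x : ℂ))⁻¹) (Metric.ball 0 1) ∧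
    (⨆ x : Metric.ball (0 : E) 1,
        (1 - ‖(x : E)‖^2) * ‖fderiv ℂ (fun x : E => (1 - (inner ℂ y x : ℂ))⁻¹) x‖)
      = ‖y‖ / (1 - ‖y‖^2) := by
  have hinner : ∀ x : E, ‖x‖ < 1 → ‖(inner ℂ y x : ℂ)‖ < 1 := by
    intro x hx
    calc ‖(inner ℂ y x : ℂ)‖ ≤ ‖y‖ * ‖x‖ := norm_inner_le_norm y x
      _ < 1 := by nlinarith [norm_nonneg y, norm_nonneg x]
  have hne : ∀ x : E, ‖x‖ < 1 → (1 - (inner ℂ y x : ℂ)) ≠ 0 := by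
    intro x hx h
    have h1 : (inner ℂ y x : ℂ) = 1 := by linear_combination -h
    have := hinner x hx
    rw [h1] at this
    simp at this
  have hder : ∀ x : E, ‖x‖ < 1 → HasFDerivAt (fun x : E => (1 - (inner ℂ y x : ℂ))⁻¹)
      ((((1 - (inner ℂ y x : ℂ))^2)⁻¹) • (innerSL ℂ y : E →L[ℂ] ℂ)) x := by
    intro x hx
    have h1 : HasFDerivAt (fun x : E => (1 : ℂ) - (inner ℂ y x : ℂ))
        (-(innerSL ℂ y : E →L[ℂ] ℂ)) x := by
      simpa using ((innerSL ℂ y).hasFDerivAt (x := x)).const_sub (1:ℂ)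
    have h2 := (hasFDerivAt_inv (hne x hx)).comp x h1
    refine HasFDerivAt.congr_fderiv h2 ?_
    ext v
    simp [mul_comm]
  have hnorm : ∀ x : E, ‖x‖ < 1 →
      ‖fderiv ℂ (fun x : E => (1 - (inner ℂ y x : ℂ))⁻¹) x‖
        = ‖y‖ / ‖(1 - (inner ℂ y x : ℂ))‖^2 := by
    intro x hx
    rw [(hder x hx).fderiv, norm_smul, innerSL_apply_norm, norm_inv, norm_pow]
    rw [inv_mul_eq_div]
  have hy2 : (0:ℝ) < 1 - ‖y‖^2 := by nlinarith [norm_nonneg y]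
  have key : ∀ x : E, ‖x‖ < 1 →
      (1 - ‖x‖^2) * ‖fderiv ℂ (fun x : E => (1 - (inner ℂ y x : ℂ))⁻¹) x‖
        ≤ ‖y‖ / (1 - ‖y‖^2) := by
    intro x hx
    rw [hnorm x hx]
    have h1 : ‖(inner ℂ y x : ℂ)‖ ≤ ‖y‖ * ‖x‖ := norm_inner_le_norm y x
    have hw : 1 - ‖y‖ * ‖x‖ ≤ ‖(1 - (inner ℂ y x : ℂ))‖ := by
      have := norm_sub_norm_le (1 : ℂ) (inner ℂ y x : ℂ)
      simp only [norm_one] at this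
      linarith
    have hwpos : 0 < ‖(1 - (inner ℂ y x : ℂ))‖ := by
      nlinarith [norm_nonneg y, norm_nonneg x]
    have hab : (0:ℝ) ≤ 1 - ‖y‖ * ‖x‖ := by nlinarith [norm_nonneg x, norm_nonneg y]
    have hw2 : (1 - ‖y‖ * ‖x‖)^2 ≤ ‖(1 - (inner ℂ y x : ℂ))‖^2 := by
      apply pow_le_pow_left₀ hab hw
    have hineq : (1 - ‖x‖^2) * (1 - ‖y‖^2) ≤ ‖(1 - (inner ℂ y x : ℂ))‖^2 := by
      nlinarith [sq_nonneg (‖x‖ - ‖y‖)]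
    rw [mul_div_assoc', div_le_div_iff₀ (by positivity) hy2]
    nlinarith [norm_nonneg y]
  constructor
  · intro x hx
    simp only [Metric.mem_ball, dist_zero_right] at hx
    exact ((hder x hx).differentiableAt).differentiableWithinAt
  · have hyball : y ∈ Metric.ball (0:E) 1 := by simpa using hy
    have hgy : (1 - ‖y‖^2) * ‖fderiv ℂ (fun x : E => (1 - (inner ℂ y x : ℂ))⁻¹) y‖
        = ‖y‖ / (1 - ‖y‖^2) := by
      rw [hnorm y hy]
      have h1 : (inner ℂ y y : ℂ) = (‖y‖:ℂ)^2 := inner_self_eq_norm_sq_to_K y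
      have h2 : ‖(1 - (inner ℂ y y : ℂ))‖ = 1 - ‖y‖^2 := by
        rw [h1, show (1 - (‖y‖:ℂ)^2) = ((1 - ‖y‖^2 : ℝ) : ℂ) by push_cast; ring,
          Complex.norm_real, Real.norm_eq_abs, abs_of_pos hy2]
      rw [h2]
      field_simp
    haveI : Nonempty (Metric.ball (0:E) 1) := ⟨⟨y, hyball⟩⟩
    apply le_antisymm
    · exact ciSup_le fun x => key x (mem_ball_zero_iff.mp x.2)
    · have hb : BddAbove (Set.range fun x : Metric.ball (0:E) 1 =>
          (1 - ‖(x:E)‖^2) * ‖fderiv ℂ (fun x : E => (1 - (inner ℂ y x : ℂ))⁻¹) x‖) :=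
        ⟨‖y‖/(1-‖y‖^2), by
          rintro _ ⟨x, rfl⟩
          exact key x (mem_ball_zero_iff.mp x.2)⟩
      calc ‖y‖ / (1 - ‖y‖^2)
          = (1 - ‖y‖^2) * ‖fderiv ℂ (fun x : E => (1 - (inner ℂ y x : ℂ))⁻¹) y‖ := hgy.symm
        _ ≤ _ := le_ciSup hb ⟨y, hyball⟩
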